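/- The linear map ∂ on the free algebra F_n sending each generator z_{A,i} to 1 (extended as a derivation) preserves the defining ideal J_n of Q_n, and hence induces a derivation ∂ of Q_n with ∂(z_{A,i}) = 1 for all A, i ∉ A. -/
import Mathlib


namespace QnPaper

/-- The defining relations of the quadratic algebra `Q_n`:
for `A ⊆ {1,…,n}` and distinct `i, j ∉ A`,
`z_{A∪{i},j} + z_{A,i} = z_{A∪{j},i} + z_{A,j}` and
`z_{A∪{i},j} * z_{A,i} = z_{A∪{j},i} * z_{A,j}`. -/
inductive QRel (k : Type) [Field k] (n : ℕ) :
    FreeAlgebra k (Finset (Fin n) × Fin n) → FreeAlgebra k (Finset (Fin n) × Fin n) → Prop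
  | add_rel (A : Finset (Fin n)) (i j : Fin n) (hi : i ∉ A) (hj : j ∉ A) (hij : i ≠ j) :
      QRel k n (FreeAlgebra.ι k (insert i A, j) + FreeAlgebra.ι k (A, i))
        (FreeAlgebra.ι k (insert j A, i) + FreeAlgebra.ι k (A, j))
  | mul_rel (A : Finset (Fin n)) (i j : Fin n) (hi : i ∉ A) (hj : j ∉ A) (hij : i ≠ j) :
      QRel k n (FreeAlgebra.ι k (insert i A, j) * FreeAlgebra.ι k (A, i))
        (FreeAlgebra.ι k (insert j A, i) * FreeAlgebra.ι k (A, j))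

/-- The quadratic algebra `Q_n`. -/
abbrev Q (k : Type) [Field k] (n : ℕ) := RingQuot (QRel k n)

/-- The generator `z_{A,i}` of `Q_n` (only meaningful when `i ∉ A`). -/
def z (k : Type) [Field k] (n : ℕ) (A : Finset (Fin n)) (i : Fin n) : Q k n :=
  RingQuot.mkAlgHom k (QRel k n) (FreeAlgebra.ι k (A, i))

noncomputable def phi (k : Type) [Field k] (n : ℕ) :
    FreeAlgebra k (Finset (Fin n) × Fin n) →ₐ[k] DualNumber (Q k n) :=
  FreeAlgebra.lift k (fun p => TrivSqZeroExt.inl (z k n p.1 p.2) + TrivSqZeroExt.inr 1)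

theorem z_add_rel (k : Type) [Field k] (n : ℕ) (A : Finset (Fin n)) (i j : Fin n)
    (hi : i ∉ A) (hj : j ∉ A) (hij : i ≠ j) :
    z k n (insert i A) j + z k n A i = z k n (insert j A) i + z k n A j := by
  have h := RingQuot.mkAlgHom_rel (s := QRel k n) k (QRel.add_rel A i j hi hj hij)
  rw [map_add, map_add] at h
  exact h

theorem z_mul_rel (k : Type) [Field k] (n : ℕ) (A : Finset (Fin n)) (i j : Fin n)
    (hi : i ∉ A) (hj : j ∉ A) (hij : i ≠ j) :
    z k n (insert i A) j * z k n A i = z k n (insert j A) i * z k n A j := by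
  have h := RingQuot.mkAlgHom_rel (s := QRel k n) k (QRel.mul_rel A i j hi hj hij)
  rw [map_mul, map_mul] at h
  exact h

theorem phi_rel (k : Type) [Field k] (n : ℕ) {x y : FreeAlgebra k (Finset (Fin n) × Fin n)}
    (h : QRel k n x y) : phi k n x = phi k n y := by
  induction h with
  | add_rel A i j hi hj hij =>
      simp only [phi, map_add, FreeAlgebra.lift_ι_apply]
      have h1 := z_add_rel k n A i j hi hj hij
      apply TrivSqZeroExt.ext <;>
        simp only [TrivSqZeroExt.fst_add, TrivSqZeroExt.snd_add, TrivSqZeroExt.fst_inl,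
          TrivSqZeroExt.snd_inl, TrivSqZeroExt.fst_inr, TrivSqZeroExt.snd_inr] <;>
        simp [h1]
  | mul_rel A i j hi hj hij =>
      simp only [phi, map_mul, FreeAlgebra.lift_ι_apply]
      have h1 := z_add_rel k n A i j hi hj hij
      have h2 := z_mul_rel k n A i j hi hj hij
      apply TrivSqZeroExt.ext
      · simp [h2]
      · simp only [TrivSqZeroExt.snd_mul, TrivSqZeroExt.fst_add, TrivSqZeroExt.snd_add,
          TrivSqZeroExt.fst_inl, TrivSqZeroExt.snd_inl, TrivSqZeroExt.fst_inr,
          TrivSqZeroExt.snd_inr]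
        simp only [MulOpposite.smul_eq_mul_unop, MulOpposite.unop_op, smul_eq_mul]
        simpa [add_comm] using h1

noncomputable def phibar (k : Type) [Field k] (n : ℕ) :
    Q k n →ₐ[k] DualNumber (Q k n) :=
  RingQuot.liftAlgHom k ⟨phi k n, fun _ _ h => phi_rel k n h⟩

theorem phibar_mk (k : Type) [Field k] (n : ℕ) (x : FreeAlgebra k (Finset (Fin n) × Fin n)) :
    phibar k n (RingQuot.mkAlgHom k (QRel k n) x) = phi k n x :=
  RingQuot.liftAlgHom_mkAlgHom_apply k (phi k n) (fun _ _ h => phi_rel k n h) x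

theorem fst_phibar (k : Type) [Field k] (n : ℕ) (a : Q k n) :
    (phibar k n a).fst = a := by
  have key : (TrivSqZeroExt.fstHom k (Q k n) (Q k n)).comp (phibar k n)
      = AlgHom.id k (Q k n) := by
    apply RingQuot.ringQuot_ext'
    apply FreeAlgebra.hom_ext
    funext p
    show (TrivSqZeroExt.fstHom k (Q k n) (Q k n)) (phibar k n _) = _
    erw [phibar_mk]
    simp [phi, FreeAlgebra.lift_ι_apply, z]
  have h2 := DFunLike.congr_fun key a
  simpa using h2

set_option maxHeartbeats 1000000 in
/-- The derivation on the free algebra sending each generator to `1` preserves the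
defining relations, hence induces a derivation of `Q n` sending each generator to `1`. -/
theorem stmt1 (k : Type) [Field k] (n : ℕ) :
    ∃ d : Q k n →ₗ[k] Q k n,
      (∀ a b : Q k n, d (a * b) = d a * b + a * d b) ∧
      ∀ (A : Finset (Fin n)) (i : Fin n), i ∉ A → d (z k n A i) = 1 := by
  refine ⟨{ toFun := fun a => (phibar k n a).snd,
            map_add' := by intro a b; show ((phibar k n) (a+b)).snd = _; rw [map_add, TrivSqZeroExt.snd_add],
            map_smul' := by intro c a; show ((phibar k n) (c • a)).snd = _; rw [map_smul, TrivSqZeroExt.snd_smul]; rfl }, ?_, ?_⟩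
  · intro a b
    show (phibar k n (a * b)).snd = _
    rw [map_mul, TrivSqZeroExt.snd_mul, fst_phibar, fst_phibar]
    show _ • _ + _ • _ = _
    simp only [MulOpposite.smul_eq_mul_unop, MulOpposite.unop_op, smul_eq_mul]
    exact add_comm _ _
  · intro A i _
    show (phibar k n (z k n A i)).snd = 1
    rw [z, phibar_mk]
    simp [phi, FreeAlgebra.lift_ι_apply]
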